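/- arXiv:2602.03259 — 2 statements merged into one kernel-verified Lean document; each statement's English description precedes it below -/
import Mathlib

section
/- If n ≥ 3 and n ≡ 3 (mod 6), then the strong odd chromatic number of the wheel W_n = C_n ∨ K_1 equals 4. -/
open SimpleGraph

/-- A coloring `φ` of the vertices of `G` is a strong odd coloring if it is proper and,
for every vertex `v` and every color `c`, the number of neighbors of `v` colored `c`
is either zero or odd. -/
def IsStrongOddColoring {V α : Type*} (G : SimpleGraph V) (φ : V → α) : Prop :=
  (∀ u v : V, G.Adj u v → φ u ≠ φ v) ∧
  ∀ (v : V) (c : α),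
    {u : V | G.Adj v u ∧ φ u = c}.ncard = 0 ∨ Odd {u : V | G.Adj v u ∧ φ u = c}.ncard

/-- The strong odd chromatic number: the least `k` such that `G` admits a strong odd
coloring with `k` colors. -/
noncomputable def strongOddChromaticNumber {V : Type*} (G : SimpleGraph V) : ℕ :=
  sInf {k : ℕ | ∃ φ : V → Fin k, IsStrongOddColoring G φ}

/-- The join `G ∨ H` of two graphs: disjoint copies of `G` and `H` together with all
edges between them. -/
def joinGraph {V W : Type*} (G : SimpleGraph V) (H : SimpleGraph W) :
    SimpleGraph (V ⊕ W) where
  Adj x y :=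
    match x, y with
    | Sum.inl a, Sum.inl b => G.Adj a b
    | Sum.inl _, Sum.inr _ => True
    | Sum.inr _, Sum.inl _ => True
    | Sum.inr a, Sum.inr b => H.Adj a b
  symm := by constructor; rintro (a | a) (b | b) h <;> first | exact h.symm | trivial
  loopless := by constructor; rintro (a | a) h <;> first | exact G.irrefl h | exact H.irrefl h

/-- The wheel graph `W_n = C_n ∨ K_1`. -/
def wheelGraph (n : ℕ) : SimpleGraph (Fin n ⊕ Fin 1) :=
  joinGraph (cycleGraph n) (⊥ : SimpleGraph (Fin 1))

/-- `G_n = C_n ∨ K̄_2`; the two vertices of `K̄_2` are `x_n = Sum.inr 0` and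
`y_n = Sum.inr 1`. -/
def cycleJoinTwo (n : ℕ) : SimpleGraph (Fin n ⊕ Fin 2) :=
  joinGraph (cycleGraph n) (⊥ : SimpleGraph (Fin 2))

/-- The one point union of graphs `G` and `H`, obtained by identifying the vertex
`a` of `G` with the vertex `b` of `H` (the identified vertex is `Sum.inl a`). -/
def onePointUnion {V W : Type*} (G : SimpleGraph V) (H : SimpleGraph W) (a : V) (b : W) :
    SimpleGraph (V ⊕ {w : W // w ≠ b}) where
  Adj x y :=
    match x, y with
    | Sum.inl u, Sum.inl v => G.Adj u v
    | Sum.inl u, Sum.inr v => u = a ∧ H.Adj b v.1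
    | Sum.inr v, Sum.inl u => u = a ∧ H.Adj b v.1
    | Sum.inr u, Sum.inr v => H.Adj u.1 v.1
  symm := by
    constructor
    rintro (u | u) (v | v) h
    · exact h.symm
    · exact h
    · exact h
    · exact h.symm
  loopless := by
    constructor
    rintro (u | u) h
    · exact G.irrefl h
    · exact H.irrefl h

/-- `I_y(G_m, G_n)`: the one point union of `G_m = C_m ∨ K̄_2` and `G_n = C_n ∨ K̄_2`
obtained by identifying the vertices `y_m` and `y_n`. -/
def Iy (m n : ℕ) :
    SimpleGraph ((Fin m ⊕ Fin 2) ⊕ {w : Fin n ⊕ Fin 2 // w ≠ Sum.inr 1}) :=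
  onePointUnion (cycleJoinTwo m) (cycleJoinTwo n) (Sum.inr 1) (Sum.inr 1)

/-- A planar embedding of a graph `G`: an injective placement of the vertices in the
plane together with, for each edge, an arc (injective path) joining the images of its
endpoints, such that arcs do not pass through images of other vertices and two arcs of
distinct edges meet only in common endpoints. -/
structure PlanarEmbedding {V : Type*} (G : SimpleGraph V) where
  vmap : V → ℝ × ℝ
  vmap_inj : Function.Injective vmap
  arc : ∀ u v : V, G.Adj u v → Path (vmap u) (vmap v)
  arc_symm : ∀ (u v : V) (h : G.Adj u v), arc v u h.symm = (arc u v h).symm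
  arc_inj : ∀ (u v : V) (h : G.Adj u v), Function.Injective (arc u v h)
  arc_vertex : ∀ (u v : V) (h : G.Adj u v) (w : V),
    vmap w ∈ Set.range (arc u v h) → w = u ∨ w = v
  arc_disjoint : ∀ (u v u' v' : V) (h : G.Adj u v) (h' : G.Adj u' v'),
    s(u, v) ≠ s(u', v') →
    Set.range (arc u v h) ∩ Set.range (arc u' v' h') ⊆
      ({vmap u, vmap v} ∩ {vmap u', vmap v'} : Set (ℝ × ℝ))

/-- A graph is planar if it admits a planar embedding. -/
def IsPlanar {V : Type*} (G : SimpleGraph V) : Prop :=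
  Nonempty (PlanarEmbedding G)

-- modulus helper
lemma soc_mod_helper {x n : ℕ} (hn : 0 < n) (hx : x < 2 * n) :
    x % n = if x < n then x else x - n := by
  split
  · exact Nat.mod_eq_of_lt ‹_›
  · rw [Nat.mod_eq_sub_mod (by omega), Nat.mod_eq_of_lt (by omega)]

lemma soc_cycle_adj_val {n : ℕ} (hn : 3 ≤ n) {i j : Fin n} :
    (cycleGraph n).Adj i j ↔ (j.val = (i.val + 1) % n ∨ i.val = (j.val + 1) % n) := by
  have hi := i.isLt; have hj := j.isLt
  rw [cycleGraph_adj', Fin.sub_def, Fin.sub_def]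
  simp only [Fin.val_mk]
  have h1 := soc_mod_helper (x := n - j.val + i.val) (n := n) (by omega) (by omega)
  have h2 := soc_mod_helper (x := n - i.val + j.val) (n := n) (by omega) (by omega)
  have h3 := soc_mod_helper (x := i.val + 1) (n := n) (by omega) (by omega)
  have h4 := soc_mod_helper (x := j.val + 1) (n := n) (by omega) (by omega)
  split_ifs at h1 h2 h3 h4 <;> omega

lemma soc_succ_mod3 {n a : ℕ} (h3 : n % 3 = 0) (hn : 0 < n) (ha : a < n) :
    ((a + 1) % n) % 3 = (a + 1) % 3 := by
  rcases Nat.lt_or_ge (a + 1) n with h | h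
  · rw [Nat.mod_eq_of_lt h]
  · have he : a + 1 = n := by omega
    rw [he, Nat.mod_self]; omega

def soc_modEquiv (n j : ℕ) (h3 : n % 3 = 0) (hj : j < 3) :
    {i : Fin n // i.val % 3 = j} ≃ Fin (n / 3) where
  toFun s := ⟨s.1.val / 3, by have h := s.1.isLt; have h2 := s.2; omega⟩
  invFun t := ⟨⟨3 * t.val + j, by have := t.isLt; omega⟩, by
    simp only [Fin.val_mk]; omega⟩
  left_inv s := by
    ext
    have h2 := s.2
    simp only [Fin.val_mk]
    omega
  right_inv t := by
    ext
    simp only [Fin.val_mk]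
    omega

lemma soc_card_mod3 {n : ℕ} (h3 : n % 3 = 0) {j : ℕ} (hj : j < 3) :
    {i : Fin n | i.val % 3 = j}.ncard = n / 3 := by
  rw [← Nat.card_coe_set_eq]
  show Nat.card {i : Fin n // i.val % 3 = j} = n / 3
  rw [Nat.card_congr (soc_modEquiv n j h3 hj)]
  simp [Nat.card_eq_fintype_card]

/-- If `n ≥ 3` and `n ≡ 3 (mod 6)`, then the strong odd chromatic number of the wheel
`W_n = C_n ∨ K_1` equals `4`. -/
theorem stmt_3 (n : ℕ) (hn : 3 ≤ n) (hmod : n % 6 = 3) :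
    strongOddChromaticNumber (wheelGraph n) = 4 := by
  have h3 : n % 3 = 0 := by omega
  have hpos : 0 < n := by omega
  -- the explicit strong odd coloring with 4 colors
  set ψ : Fin n ⊕ Fin 1 → Fin 4 :=
    Sum.elim (fun i : Fin n => (⟨i.val % 3, by omega⟩ : Fin 4))
      (fun _ : Fin 1 => (⟨3, by omega⟩ : Fin 4)) with hψ
  have hmem : 4 ∈ {k : ℕ | ∃ φ : Fin n ⊕ Fin 1 → Fin k,
      IsStrongOddColoring (wheelGraph n) φ} := by
    refine ⟨ψ, ?_, ?_⟩
    · -- properness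
      rintro (i | a) (j | b) hadj
      · have hc : (cycleGraph n).Adj i j := hadj
        rw [soc_cycle_adj_val hn] at hc
        have hi := i.isLt; have hj := j.isLt
        simp only [hψ, Sum.elim_inl, ne_eq, Fin.mk.injEq]
        rcases hc with h | h
        · rw [soc_mod_helper hpos (by omega)] at h
          split_ifs at h <;> omega
        · rw [soc_mod_helper hpos (by omega)] at h
          split_ifs at h <;> omega
      · have hi := i.isLt
        simp only [hψ, Sum.elim_inl, Sum.elim_inr, ne_eq, Fin.mk.injEq]
        omega
      · have hj := j.isLt
        simp only [hψ, Sum.elim_inl, Sum.elim_inr, ne_eq, Fin.mk.injEq]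
        omega
      · exact absurd hadj (by exact fun h => h)
    · -- strong odd condition
      rintro (i | a) c
      · by_cases hc3 : c = (⟨3, by omega⟩ : Fin 4)
        · right
          have hset : {u | (wheelGraph n).Adj (Sum.inl i) u ∧ ψ u = c} =
              {Sum.inr (0 : Fin 1)} := by
            ext u
            rcases u with j | b
            · simp only [Set.mem_setOf_eq, Set.mem_singleton_iff, hψ, Sum.elim_inl, hc3]
              constructor
              · rintro ⟨-, h⟩
                have := congrArg Fin.val h
                simp only [Fin.val_mk] at this
                omega
              · intro h; exact absurd h (by simp)
            · simp only [Set.mem_setOf_eq, Set.mem_singleton_iff, hψ, Sum.elim_inr, hc3]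
              constructor
              · intro _; rw [Subsingleton.elim b (0 : Fin 1)]
              · intro _
                exact ⟨(trivial : True), trivial⟩
          rw [hset, Set.ncard_singleton]
          exact ⟨0, rfl⟩
        · have hclt : c.val < 3 := by
            have := c.isLt
            rcases Nat.lt_or_ge c.val 3 with h | h
            · exact h
            · exact absurd (Fin.ext (show c.val = 3 by omega) : c = ⟨3, by omega⟩) hc3
          have hsub : {u | (wheelGraph n).Adj (Sum.inl i) u ∧ ψ u = c}.Subsingleton := by
            rintro (j1 | b1) ⟨ha1, hc1⟩ (j2 | b2) ⟨ha2, hc2⟩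
            · -- both cycle vertices
              have hA1 : (cycleGraph n).Adj i j1 := ha1
              have hA2 : (cycleGraph n).Adj i j2 := ha2
              rw [soc_cycle_adj_val hn] at hA1 hA2
              have e1 : j1.val % 3 = c.val := congrArg Fin.val hc1
              have e2 : j2.val % 3 = c.val := congrArg Fin.val hc2
              have hi := i.isLt; have hj1 := j1.isLt; have hj2 := j2.isLt
              have k1 : j1.val = i.val + 1 ∨ (i.val = n - 1 ∧ j1.val = 0) ∨
                  i.val = j1.val + 1 ∨ (j1.val = n - 1 ∧ i.val = 0) := by
                rcases hA1 with h | h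
                · rw [soc_mod_helper hpos (by omega)] at h
                  split_ifs at h <;> omega
                · rw [soc_mod_helper hpos (by omega)] at h
                  split_ifs at h <;> omega
              have k2 : j2.val = i.val + 1 ∨ (i.val = n - 1 ∧ j2.val = 0) ∨
                  i.val = j2.val + 1 ∨ (j2.val = n - 1 ∧ i.val = 0) := by
                rcases hA2 with h | h
                · rw [soc_mod_helper hpos (by omega)] at h
                  split_ifs at h <;> omega
                · rw [soc_mod_helper hpos (by omega)] at h
                  split_ifs at h <;> omega
              exact congrArg Sum.inl (Fin.ext (by omega))
            · exact absurd (hc2 ▸ rfl : ψ (Sum.inr b2) = c).symm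
                (by
                  intro h
                  apply hc3
                  exact h ▸ rfl)
            · exact absurd (hc1 ▸ rfl : ψ (Sum.inr b1) = c).symm
                (by
                  intro h
                  apply hc3
                  exact h ▸ rfl)
            · rw [Subsingleton.elim b1 b2]
          rcases hsub.eq_empty_or_singleton with h | ⟨x, h⟩
          · left; rw [h, Set.ncard_empty]
          · right; rw [h, Set.ncard_singleton]; exact ⟨0, rfl⟩
      · by_cases hc3 : c = (⟨3, by omega⟩ : Fin 4)
        · left
          have hset : {u | (wheelGraph n).Adj (Sum.inr a) u ∧ ψ u = c} = ∅ := by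
            ext u
            rcases u with j | b
            · simp only [Set.mem_setOf_eq, Set.mem_empty_iff_false, iff_false, hψ,
                Sum.elim_inl, hc3, not_and]
              intro _ h
              have := congrArg Fin.val h
              simp only [Fin.val_mk] at this
              have := j.isLt
              omega
            · simp only [Set.mem_setOf_eq, Set.mem_empty_iff_false, iff_false, not_and]
              intro h
              exact absurd h (by exact fun h => h)
          rw [hset, Set.ncard_empty]
        · right
          have hclt : c.val < 3 := by
            have := c.isLt
            rcases Nat.lt_or_ge c.val 3 with h | h
            · exact h
            · exact absurd (Fin.ext (show c.val = 3 by omega) : c = ⟨3, by omega⟩) hc3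
          have hset : {u | (wheelGraph n).Adj (Sum.inr a) u ∧ ψ u = c} =
              Sum.inl '' {i : Fin n | i.val % 3 = c.val} := by
            ext u
            rcases u with j | b
            · simp only [Set.mem_setOf_eq, Set.mem_image, hψ, Sum.elim_inl]
              constructor
              · rintro ⟨-, hcol⟩
                exact ⟨j, congrArg Fin.val hcol, rfl⟩
              · rintro ⟨i', hi', he⟩
                obtain rfl : i' = j := Sum.inl_injective he
                exact ⟨(trivial : True), Fin.ext hi'⟩
            · simp only [Set.mem_setOf_eq, Set.mem_image]
              constructor
              · rintro ⟨h, -⟩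
                exact absurd h (by exact fun h => h)
              · rintro ⟨i', -, he⟩
                exact absurd he (by simp)
          rw [hset, Set.ncard_image_of_injective _ Sum.inl_injective,
            soc_card_mod3 h3 hclt]
          exact ⟨n / 6, by omega⟩
  unfold strongOddChromaticNumber
  refine le_antisymm (Nat.sInf_le hmem) (le_csInf ⟨4, hmem⟩ ?_)
  rintro k ⟨φ, hproper, -⟩
  by_contra hlt
  have hk : k ≤ 3 := by omega
  set cc : Fin k := φ (Sum.inr 0) with hcc
  have hcyc_ne : ∀ i : Fin n, φ (Sum.inl i) ≠ cc := by
    intro i h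
    exact hproper (Sum.inr 0) (Sum.inl i) (by exact (trivial : True)) h.symm
  set g : ℕ → Fin k := fun m => φ (Sum.inl ⟨m % n, Nat.mod_lt _ hpos⟩) with hg
  have hadj : ∀ m : ℕ, (cycleGraph n).Adj ⟨m % n, Nat.mod_lt _ hpos⟩
      ⟨(m + 1) % n, Nat.mod_lt _ hpos⟩ := by
    intro m
    rw [soc_cycle_adj_val hn]
    left
    simp only [Fin.val_mk]
    exact (Nat.mod_add_mod m n 1).symm
  have hne : ∀ m : ℕ, g (m + 1) ≠ g m := by
    intro m h
    exact hproper (Sum.inl ⟨m % n, Nat.mod_lt _ hpos⟩)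
      (Sum.inl ⟨(m + 1) % n, Nat.mod_lt _ hpos⟩) (hadj m) h.symm
  have step : ∀ m : ℕ, g (m + 2) = g m := by
    intro m
    have b0 := (g m).isLt
    have b1 := (g (m + 1)).isLt
    have b2 := (g (m + 2)).isLt
    have bc := cc.isLt
    have d1 : (g (m + 1)).val ≠ (g m).val := fun h => hne m (Fin.ext h)
    have d2 : (g (m + 2)).val ≠ (g (m + 1)).val := fun h => hne (m + 1) (Fin.ext h)
    have d3 : (g m).val ≠ cc.val := fun h => hcyc_ne _ (Fin.ext h)
    have d4 : (g (m + 1)).val ≠ cc.val := fun h => hcyc_ne _ (Fin.ext h)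
    have d5 : (g (m + 2)).val ≠ cc.val := fun h => hcyc_ne _ (Fin.ext h)
    exact Fin.ext (by omega)
  have heven : ∀ m : ℕ, g (2 * m) = g 0 := by
    intro m
    induction m with
    | zero => rfl
    | succ t ih =>
      have h2 : 2 * (t + 1) = 2 * t + 2 := by ring
      rw [h2, step, ih]
  have hodd : ∀ m : ℕ, g (2 * m + 1) = g 1 := by
    intro m
    induction m with
    | zero => rfl
    | succ t ih =>
      have h2 : 2 * (t + 1) + 1 = (2 * t + 1) + 2 := by ring
      rw [h2, step, ih]
  obtain ⟨t, ht⟩ : ∃ t, n = 2 * t + 1 := ⟨n / 2, by omega⟩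
  have h1 : g n = g 1 := by rw [ht]; exact hodd t
  have h2 : g n = g 0 := by
    simp only [hg]
    exact congrArg φ (congrArg Sum.inl (Fin.ext (by simp)))
  exact hne 0 (h1.symm.trans h2)
end

section
/- The strong odd chromatic number of I_y(G_7, G_8) equals 16. -/
open SimpleGraph

instance {V W : Type*} (G : SimpleGraph V) (H : SimpleGraph W)
    [DecidableRel G.Adj] [DecidableRel H.Adj] : DecidableRel (joinGraph G H).Adj :=
  fun x y => match x, y with
  | Sum.inl a, Sum.inl b => inferInstanceAs (Decidable (G.Adj a b))
  | Sum.inl _, Sum.inr _ => .isTrue trivial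
  | Sum.inr _, Sum.inl _ => .isTrue trivial
  | Sum.inr a, Sum.inr b => inferInstanceAs (Decidable (H.Adj a b))

instance (n : ℕ) : DecidableRel (cycleJoinTwo n).Adj :=
  inferInstanceAs (DecidableRel (joinGraph _ _).Adj)

instance {V W : Type*} [DecidableEq V] (G : SimpleGraph V) (H : SimpleGraph W)
    (a : V) (b : W) [DecidableRel G.Adj] [DecidableRel H.Adj] :
    DecidableRel (onePointUnion G H a b).Adj :=
  fun x y => match x, y with
  | Sum.inl u, Sum.inl v => inferInstanceAs (Decidable (G.Adj u v))
  | Sum.inl u, Sum.inr v => inferInstanceAs (Decidable (u = a ∧ H.Adj b v.1))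
  | Sum.inr v, Sum.inl u => inferInstanceAs (Decidable (u = a ∧ H.Adj b v.1))
  | Sum.inr u, Sum.inr v => inferInstanceAs (Decidable (H.Adj u.1 v.1))

instance (m n : ℕ) : DecidableRel (Iy m n).Adj :=
  inferInstanceAs (DecidableRel (onePointUnion _ _ _ _).Adj)

lemma ncard_filter {V : Type*} [Fintype V] [DecidableEq V] (p : V → Prop) [DecidablePred p] :
    {u | p u}.ncard = (Finset.univ.filter p).card := by
  rw [Set.ncard_eq_toFinset_card']
  simp [Set.toFinset_setOf]

abbrev Vty := (Fin 7 ⊕ Fin 2) ⊕ {w : Fin 8 ⊕ Fin 2 // w ≠ Sum.inr 1}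

def φ0 : Vty → Fin 16
  | Sum.inl (Sum.inl i) => ⟨i.1, by omega⟩
  | Sum.inl (Sum.inr 0) => 7
  | Sum.inl (Sum.inr 1) => 15
  | Sum.inr ⟨Sum.inl j, _⟩ => ⟨7 + j.1, by omega⟩
  | Sum.inr ⟨Sum.inr _, _⟩ => 0

lemma upper : IsStrongOddColoring (Iy 7 8) φ0 := by
  constructor
  · decide
  · intro v c
    rw [ncard_filter]
    revert v c
    decide
-- lower bound machinery
def c7 (i : Fin 7) : Vty := Sum.inl (Sum.inl i)
def x7 : Vty := Sum.inl (Sum.inr 0)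
def yv : Vty := Sum.inl (Sum.inr 1)
def c8 (j : Fin 8) : Vty := Sum.inr ⟨Sum.inl j, by simp⟩
def x8 : Vty := Sum.inr ⟨Sum.inr 0, by decide⟩

lemma adj_x7_c7 (i : Fin 7) : (Iy 7 8).Adj x7 (c7 i) := trivial
lemma adj_y_c7 (i : Fin 7) : (Iy 7 8).Adj yv (c7 i) := trivial
lemma adj_x8_c8 (j : Fin 8) : (Iy 7 8).Adj x8 (c8 j) := trivial
lemma adj_y_c8 (j : Fin 8) : (Iy 7 8).Adj yv (c8 j) := ⟨rfl, trivial⟩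

lemma adj_c7 (i : Fin 7) : (Iy 7 8).Adj (c7 i) (c7 (i+1)) := by
  show (cycleGraph 7).Adj i (i+1)
  rw [cycleGraph_adj']
  right
  simp

lemma adj_c8 (j : Fin 8) : (Iy 7 8).Adj (c8 j) (c8 (j+1)) := by
  show (cycleGraph 8).Adj j (j+1)
  rw [cycleGraph_adj']
  right
  simp

lemma nbr_c7 {i : Fin 7} {u : Vty} (hu : (Iy 7 8).Adj (c7 i) u) :
    u = c7 (i-1) ∨ u = c7 (i+1) ∨ u = x7 ∨ u = yv := by
  obtain ((j | b) | ⟨(j | b), hw⟩) := u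
  · have hadj : (cycleGraph 7).Adj i j := hu
    rw [cycleGraph_adj'] at hadj
    rcases hadj with h2 | h2
    · left
      have h3 : i - j = 1 := Fin.ext h2
      have hj : j = i - 1 := by rw [← h3]; exact (sub_sub_cancel i j).symm
      rw [hj]; rfl
    · right; left
      have h3 : j - i = 1 := Fin.ext h2
      have hj : j = i + 1 := by
        rw [sub_eq_iff_eq_add] at h3; rw [h3, add_comm]
      rw [hj]; rfl
  · fin_cases b
    · right; right; left; rfl
    · right; right; right; rfl
  · exact absurd hu.1 (by simp)
  · exact absurd hu.1 (by simp)

lemma nbr_c8 {j : Fin 8} {u : Vty} (hu : (Iy 7 8).Adj (c8 j) u) :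
    u = c8 (j-1) ∨ u = c8 (j+1) ∨ u = x8 ∨ u = yv := by
  obtain ((i | b) | ⟨(j' | b), hw⟩) := u
  · exact absurd hu.1 (by simp)
  · have hb : b = 1 := by
      have := hu.1
      simpa using this
    subst hb
    right; right; right; rfl
  · have hadj : (cycleGraph 8).Adj j j' := hu
    rw [cycleGraph_adj'] at hadj
    rcases hadj with h2 | h2
    · left
      have h3 : j - j' = 1 := Fin.ext h2
      have hj : j' = j - 1 := by rw [← h3]; exact (sub_sub_cancel j j').symm
      subst hj; rfl
    · right; left
      have h3 : j' - j = 1 := Fin.ext h2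
      have hj : j' = j + 1 := by
        rw [sub_eq_iff_eq_add] at h3; rw [h3, add_comm]
      subst hj; rfl
  · fin_cases b
    · right; right; left; rfl
    · exact absurd rfl hw

lemma nbr_x7 {u : Vty} (hu : (Iy 7 8).Adj x7 u) : ∃ i, u = c7 i := by
  obtain ((j | b) | ⟨(j | b), hw⟩) := u
  · exact ⟨j, rfl⟩
  · have : (⊥ : SimpleGraph (Fin 2)).Adj 0 b := hu
    simp at this
  · exact absurd hu.1 (by decide)
  · exact absurd hu.1 (by decide)

lemma nbr_x8 {u : Vty} (hu : (Iy 7 8).Adj x8 u) : ∃ j, u = c8 j := by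
  obtain ((j | b) | ⟨(j | b), hw⟩) := u
  · exact absurd hu.1 (by simp)
  · have : (⊥ : SimpleGraph (Fin 2)).Adj 1 0 := hu.2
    simp at this
  · exact ⟨j, rfl⟩
  · have : (⊥ : SimpleGraph (Fin 2)).Adj 0 b := hu
    simp at this

lemma nbr_y {u : Vty} (hu : (Iy 7 8).Adj yv u) : (∃ i, u = c7 i) ∨ ∃ j, u = c8 j := by
  obtain ((j | b) | ⟨(j | b), hw⟩) := u
  · exact Or.inl ⟨j, rfl⟩
  · have : (⊥ : SimpleGraph (Fin 2)).Adj 1 b := hu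
    simp at this
  · exact Or.inr ⟨j, rfl⟩
  · have : (⊥ : SimpleGraph (Fin 2)).Adj 1 b := hu.2
    simp at this
section Lower
variable {k : ℕ} {φ : Vty → Fin k}

lemma third (h : IsStrongOddColoring (Iy 7 8) φ) {v u1 u2 : Vty}
    (h1 : (Iy 7 8).Adj v u1) (h2 : (Iy 7 8).Adj v u2) (hne : u1 ≠ u2) (hc : φ u1 = φ u2) :
    ∃ u3, (Iy 7 8).Adj v u3 ∧ φ u3 = φ u1 ∧ u3 ≠ u1 ∧ u3 ≠ u2 := by
  by_contra hcon
  push_neg at hcon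
  have hS : {u : Vty | (Iy 7 8).Adj v u ∧ φ u = φ u1} = {u1, u2} := by
    ext u
    simp only [Set.mem_setOf_eq, Set.mem_insert_iff, Set.mem_singleton_iff]
    constructor
    · rintro ⟨ha, hb⟩
      by_contra hn
      push_neg at hn
      exact hn.2 (hcon u ha hb hn.1)
    · rintro (rfl | rfl)
      exacts [⟨h1, rfl⟩, ⟨h2, hc.symm⟩]
  rcases h.2 v (φ u1) with h0 | hodd
  · rw [hS, Set.ncard_pair hne] at h0; omega
  · rw [hS, Set.ncard_pair hne] at hodd
    exact absurd hodd (by decide)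

lemma adj7 (h : IsStrongOddColoring (Iy 7 8) φ) (m : Fin 7) :
    φ (c7 m) ≠ φ (c7 (m+1)) := h.1 _ _ (adj_c7 m)

lemma adj8 (h : IsStrongOddColoring (Iy 7 8) φ) (m : Fin 8) :
    φ (c8 m) ≠ φ (c8 (m+1)) := h.1 _ _ (adj_c8 m)

lemma c7_inj : Function.Injective c7 := fun a b e => by
  simpa [c7] using e

lemma c8_inj : Function.Injective c8 := fun a b e => by
  simpa [c8] using e

lemma fin7_sub_ne : ∀ m : Fin 7, m - 1 ≠ m + 1 := by decide
lemma fin8_sub_ne : ∀ m : Fin 8, m - 1 ≠ m + 1 := by decide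

lemma dist2_7 (h : IsStrongOddColoring (Iy 7 8) φ) (m : Fin 7)
    (hc : φ (c7 (m-1)) = φ (c7 (m+1))) : False := by
  have hne : c7 (m-1) ≠ c7 (m+1) := fun e =>
    absurd (c7_inj e) (fin7_sub_ne m)
  have a1 : (Iy 7 8).Adj (c7 m) (c7 (m-1)) := by
    have := adj_c7 (m-1)
    rw [show m - 1 + 1 = m by exact sub_add_cancel m 1] at this
    exact this.symm
  have a2 := adj_c7 m
  obtain ⟨u3, hadj, hcol, hne1, hne2⟩ := third h a1 a2 hne hc
  rcases nbr_c7 hadj with rfl | rfl | rfl | rfl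
  · exact hne1 rfl
  · exact hne2 rfl
  · exact h.1 x7 (c7 (m-1)) (adj_x7_c7 _) hcol
  · exact h.1 yv (c7 (m-1)) (adj_y_c7 _) hcol

lemma dist2_8 (h : IsStrongOddColoring (Iy 7 8) φ) (m : Fin 8)
    (hc : φ (c8 (m-1)) = φ (c8 (m+1))) : False := by
  have hne : c8 (m-1) ≠ c8 (m+1) := fun e =>
    absurd (c8_inj e) (fin8_sub_ne m)
  have a1 : (Iy 7 8).Adj (c8 m) (c8 (m-1)) := by
    have := adj_c8 (m-1)
    rw [show m - 1 + 1 = m by exact sub_add_cancel m 1] at this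
    exact this.symm
  have a2 := adj_c8 m
  obtain ⟨u3, hadj, hcol, hne1, hne2⟩ := third h a1 a2 hne hc
  rcases nbr_c8 hadj with rfl | rfl | rfl | rfl
  · exact hne1 rfl
  · exact hne2 rfl
  · exact h.1 x8 (c8 (m-1)) (adj_x8_c8 _) hcol
  · exact h.1 yv (c8 (m-1)) (adj_y_c8 _) hcol

lemma close7 (h : IsStrongOddColoring (Iy 7 8) φ) (i j : Fin 7)
    (hcl : j = i+1 ∨ i = j+1 ∨ j = i+2 ∨ i = j+2) (hc : φ (c7 i) = φ (c7 j)) : False := by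
  rcases hcl with rfl | rfl | rfl | rfl
  · exact adj7 h i hc
  · exact adj7 h j hc.symm
  · apply dist2_7 h (i+1)
    rw [show i+1-1 = i from by exact add_sub_cancel_right i 1,
        show i+1+1 = i+2 from by exact (by decide : ∀ x : Fin 7, x+1+1 = x+2) _]
    exact hc
  · apply dist2_7 h (j+1)
    rw [show j+1-1 = j from by exact add_sub_cancel_right j 1,
        show j+1+1 = j+2 from by exact (by decide : ∀ x : Fin 7, x+1+1 = x+2) _]
    exact hc.symm

lemma close8 (h : IsStrongOddColoring (Iy 7 8) φ) (i j : Fin 8)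
    (hcl : j = i+1 ∨ i = j+1 ∨ j = i+2 ∨ i = j+2) (hc : φ (c8 i) = φ (c8 j)) : False := by
  rcases hcl with rfl | rfl | rfl | rfl
  · exact adj8 h i hc
  · exact adj8 h j hc.symm
  · apply dist2_8 h (i+1)
    rw [show i+1-1 = i from by exact add_sub_cancel_right i 1,
        show i+1+1 = i+2 from by exact (by decide : ∀ x : Fin 8, x+1+1 = x+2) _]
    exact hc
  · apply dist2_8 h (j+1)
    rw [show j+1-1 = j from by exact add_sub_cancel_right j 1,
        show j+1+1 = j+2 from by exact (by decide : ∀ x : Fin 8, x+1+1 = x+2) _]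
    exact hc.symm

lemma distinct7 (h : IsStrongOddColoring (Iy 7 8) φ) {i j : Fin 7}
    (hij : i ≠ j) (hc : φ (c7 i) = φ (c7 j)) : False := by
  obtain ⟨u3, hadj, hcol, hne1, hne2⟩ :=
    third h (adj_x7_c7 i) (adj_x7_c7 j) (fun e => hij (c7_inj e)) hc
  obtain ⟨m, rfl⟩ := nbr_x7 hadj
  have hmi : m ≠ i := fun e => hne1 (by rw [e])
  have hmj : m ≠ j := fun e => hne2 (by rw [e])
  have tri : ∀ a b c : Fin 7, a ≠ b → b ≠ c → a ≠ c →
      ((b = a+1 ∨ a = b+1 ∨ b = a+2 ∨ a = b+2) ∨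
       (c = b+1 ∨ b = c+1 ∨ c = b+2 ∨ b = c+2) ∨
       (c = a+1 ∨ a = c+1 ∨ c = a+2 ∨ a = c+2)) := by decide
  rcases tri i j m hij hmj.symm hmi.symm with hcl | hcl | hcl
  · exact close7 h i j hcl hc
  · exact close7 h j m hcl (hc.symm.trans hcol.symm)
  · exact close7 h i m hcl hcol.symm

lemma distinct8 (h : IsStrongOddColoring (Iy 7 8) φ) {i j : Fin 8}
    (hij : i ≠ j) (hc : φ (c8 i) = φ (c8 j)) : False := by
  obtain ⟨u3, hadj, hcol, hne1, hne2⟩ :=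
    third h (adj_x8_c8 i) (adj_x8_c8 j) (fun e => hij (c8_inj e)) hc
  obtain ⟨m, rfl⟩ := nbr_x8 hadj
  have hmi : m ≠ i := fun e => hne1 (by rw [e])
  have hmj : m ≠ j := fun e => hne2 (by rw [e])
  have tri : ∀ a b c : Fin 8, a ≠ b → b ≠ c → a ≠ c →
      ((b = a+1 ∨ a = b+1 ∨ b = a+2 ∨ a = b+2) ∨
       (c = b+1 ∨ b = c+1 ∨ c = b+2 ∨ b = c+2) ∨
       (c = a+1 ∨ a = c+1 ∨ c = a+2 ∨ a = c+2)) := by decide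
  rcases tri i j m hij hmj.symm hmi.symm with hcl | hcl | hcl
  · exact close8 h i j hcl hc
  · exact close8 h j m hcl (hc.symm.trans hcol.symm)
  · exact close8 h i m hcl hcol.symm

lemma distinct78 (h : IsStrongOddColoring (Iy 7 8) φ) (i : Fin 7) (j : Fin 8)
    (hc : φ (c7 i) = φ (c8 j)) : False := by
  have hne : c7 i ≠ c8 j := fun e => by simp [c7, c8] at e
  obtain ⟨u3, hadj, hcol, hne1, hne2⟩ := third h (adj_y_c7 i) (adj_y_c8 j) hne hc
  rcases nbr_y hadj with ⟨m, rfl⟩ | ⟨m, rfl⟩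
  · exact distinct7 h (fun e => hne1 (by rw [e])) hcol
  · exact distinct8 h (fun e => hne2 (by rw [e])) (hcol.trans hc)

end Lower
/-- The strong odd chromatic number of `I_y(G_7, G_8)` equals `16`. -/
theorem stmt_13 : strongOddChromaticNumber (Iy 7 8) = 16 := by
  have hmem : (16 : ℕ) ∈ {k : ℕ | ∃ ψ : Vty → Fin k, IsStrongOddColoring (Iy 7 8) ψ} :=
    ⟨φ0, upper⟩
  apply le_antisymm
  · exact Nat.sInf_le hmem
  · apply le_csInf ⟨16, hmem⟩
    rintro k ⟨φ, hφ⟩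
    classical
    set T : Finset Vty := (Finset.univ.image c7 ∪ Finset.univ.image c8) ∪ {yv} with hT
    have hcard : T.card = 16 := by decide
    have hinj : Set.InjOn φ T := by
      intro a ha b hb hab
      simp only [hT, Finset.coe_union, Finset.coe_image, Finset.coe_singleton, Set.mem_union,
        Set.mem_image, Set.mem_singleton_iff, Finset.coe_univ, Set.image_univ,
        Set.mem_range] at ha hb
      rcases ha with (⟨i, rfl⟩ | ⟨i, rfl⟩) | rfl <;> rcases hb with (⟨j, rfl⟩ | ⟨j, rfl⟩) | rfl
      · by_contra hne; exact distinct7 hφ (fun e => hne (by rw [e])) hab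
      · exact (distinct78 hφ i j hab).elim
      · exact (hφ.1 yv (c7 i) (adj_y_c7 i) hab.symm).elim
      · exact (distinct78 hφ j i hab.symm).elim
      · by_contra hne; exact distinct8 hφ (fun e => hne (by rw [e])) hab
      · exact (hφ.1 yv (c8 i) (adj_y_c8 i) hab.symm).elim
      · exact (hφ.1 yv (c7 j) (adj_y_c7 j) hab).elim
      · exact (hφ.1 yv (c8 j) (adj_y_c8 j) hab).elim
      · rfl
    have h1 : (T.image φ).card = 16 := by rw [Finset.card_image_of_injOn hinj, hcard]
    calc (16 : ℕ) = (T.image φ).card := h1.symm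
      _ ≤ Fintype.card (Fin k) := Finset.card_le_univ _
      _ = k := Fintype.card_fin k
end
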